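/- Let λ0, λ2, M be positive reals with √(λ0/λ2) ≤ M, and let b ∈ ℝ. Define β̂ = T(b; 2√(λ0·λ2), M) if |b| ≤ 2√(λ0·λ2) + √(λ0/λ2), and β̂ = T(b/(1 + 2λ2); 0, M) otherwise. Then β̂ is a minimizer of the function β ↦ (1/2)(β − b)² + 2λ0·B(β·√(λ2/λ0)) over the set {β ∈ ℝ : |β| ≤ M}. -/

import Mathlib

/-- The reverse Huber function: `B(t) = |t|` for `|t| ≤ 1` and `B(t) = (t² + 1)/2` otherwise. -/
noncomputable def revHuber (t : ℝ) : ℝ := if |t| ≤ 1 then |t| else (t ^ 2 + 1) / 2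

/-- The boxed soft-thresholding operator `T(t; a, m)`. -/
noncomputable def boxST (t a m : ℝ) : ℝ :=
  if |t| ≤ a then 0
  else if |t| ≤ a + m then (|t| - a) * Real.sign t
  else m * Real.sign t

lemma huber_eq (l0 l2 : ℝ) (hl0 : 0 < l0) (hl2 : 0 < l2) (β : ℝ) :
    2 * l0 * revHuber (β * Real.sqrt (l2 / l0)) =
      2 * Real.sqrt (l0 * l2) * |β| + l2 * (max (|β| - Real.sqrt (l0 / l2)) 0) ^ 2 := by
  have hs : Real.sqrt (l2 / l0) > 0 := Real.sqrt_pos.2 (div_pos hl2 hl0)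
  have hr : Real.sqrt (l0 / l2) > 0 := Real.sqrt_pos.2 (div_pos hl0 hl2)
  set s := Real.sqrt (l2 / l0)
  set r := Real.sqrt (l0 / l2)
  have hsr : s * r = 1 := by
    rw [← Real.sqrt_mul (by positivity)]
    rw [show l2 / l0 * (l0 / l2) = 1 by field_simp]
    exact Real.sqrt_one
  have hs2 : s ^ 2 = l2 / l0 := Real.sq_sqrt (by positivity)
  have hr2 : r ^ 2 = l0 / l2 := Real.sq_sqrt (by positivity)
  have hrr : l2 * r ^ 2 = l0 := by rw [hr2]; field_simp
  have hA : Real.sqrt (l0 * l2) = l2 * r := by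
    rw [show l0 * l2 = (l2 * r) ^ 2 by rw [mul_pow, hr2]; field_simp]
    exact Real.sqrt_sq (by positivity)
  have habs : |β * s| = |β| * s := by rw [abs_mul, abs_of_pos hs]
  rw [revHuber, habs]
  by_cases h : |β| ≤ r
  · rw [if_pos (by nlinarith [abs_nonneg β])]
    rw [max_eq_right (by linarith)]
    have hls : l0 * s = l2 * r := by
      have h1 : l0 * s * r = l2 * r * r := by
        rw [mul_assoc, hsr, mul_one]; linear_combination -hrr
      exact mul_right_cancel₀ (ne_of_gt hr) h1
    rw [hA]; linear_combination 2 * |β| * hls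
  · push_neg at h
    rw [if_neg (by push_neg; nlinarith)]
    rw [max_eq_left (by linarith)]
    have hb2 : |β| ^ 2 = β ^ 2 := sq_abs β
    have hss : (β * s) ^ 2 = β ^ 2 * (l2 / l0) := by rw [mul_pow, hs2]
    rw [hss, hA]
    field_simp
    linear_combination -l2 * hb2 - hrr

lemma caseA (a r l2 b β : ℝ) (hl2 : 0 ≤ l2) (hr : 0 ≤ r) (hba : |b| ≤ a) :
    1 / 2 * (0 - b) ^ 2 + (a * |(0:ℝ)| + l2 * (max (|(0:ℝ)| - r) 0) ^ 2) ≤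
      1 / 2 * (β - b) ^ 2 + (a * |β| + l2 * (max (|β| - r) 0) ^ 2) := by
  have h1 : b * β ≤ a * |β| := by
    calc b * β ≤ |b * β| := le_abs_self _
    _ = |b| * |β| := abs_mul b β
    _ ≤ a * |β| := mul_le_mul_of_nonneg_right hba (abs_nonneg β)
  simp only [abs_zero, zero_sub, max_eq_right (neg_nonpos.2 hr)]
  nlinarith [sq_nonneg β, mul_nonneg hl2 (sq_nonneg (max (|β| - r) 0)), sq_abs β]

lemma caseB (a r l2 σ x b β : ℝ) (hl2 : 0 ≤ l2) (hσ : σ ^ 2 = 1) (ha : 0 ≤ a)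
    (hb : σ * x = b) (hβ : σ * β ≤ |β|) :
    1 / 2 * ((x - a) * σ - b) ^ 2 + (a * (x - a) + l2 * 0 ^ 2) ≤
      1 / 2 * (β - b) ^ 2 + (a * |β| + l2 * (max (|β| - r) 0) ^ 2) := by
  subst hb
  have key : 1 / 2 * (β - σ * x) ^ 2 + (a * |β| + l2 * (max (|β| - r) 0) ^ 2)
      - (1 / 2 * ((x - a) * σ - σ * x) ^ 2 + (a * (x - a) + l2 * 0 ^ 2))
      = 1 / 2 * (β - (x - a) * σ) ^ 2 + a * (|β| - σ * β)
        + l2 * (max (|β| - r) 0) ^ 2 := by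
    linear_combination (-(x - a) ^ 2 / 2 - a ^ 2 / 2 + x ^ 2 / 2) * hσ
  nlinarith [sq_nonneg (β - (x - a) * σ), mul_nonneg hl2 (sq_nonneg (max (|β| - r) 0)),
    mul_nonneg ha (sub_nonneg.2 hβ), key]

lemma caseC1 (r l2 σ c b β : ℝ) (hl2 : 0 ≤ l2) (hσ : σ ^ 2 = 1)
    (hr : 0 ≤ r) (hrc : r ≤ c) (hb : σ * ((1 + 2 * l2) * c) = b) (hβ : σ * β ≤ |β|) :
    1 / 2 * (c * σ - b) ^ 2 + (2 * l2 * r * c + l2 * (c - r) ^ 2) ≤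
      1 / 2 * (β - b) ^ 2
        + (2 * l2 * r * |β| + l2 * (max (|β| - r) 0) ^ 2) := by
  subst hb
  have htan : (c - r) ^ 2 + 2 * (c - r) * (|β| - c) ≤ (max (|β| - r) 0) ^ 2 := by
    rcases le_total (|β|) r with h | h
    · rw [max_eq_right (by linarith)]; nlinarith
    · rw [max_eq_left (by linarith)]; nlinarith [sq_nonneg (|β| - c)]
  have key : 1 / 2 * (β - σ * ((1 + 2 * l2) * c)) ^ 2
        + (2 * l2 * r * |β| + l2 * (max (|β| - r) 0) ^ 2)
      - (1 / 2 * (c * σ - σ * ((1 + 2 * l2) * c)) ^ 2 + (2 * l2 * r * c + l2 * (c - r) ^ 2))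
      = 1 / 2 * (β - c * σ) ^ 2 + (2 * l2 * r + 2 * l2 * (c - r)) * (|β| - σ * β)
        + l2 * ((max (|β| - r) 0) ^ 2 - ((c - r) ^ 2 + 2 * (c - r) * (|β| - c))) := by
    linear_combination (2 * l2 * c ^ 2) * hσ
  nlinarith [sq_nonneg (β - c * σ), key,
    mul_nonneg (by nlinarith : (0:ℝ) ≤ 2 * l2 * r + 2 * l2 * (c - r)) (sub_nonneg.2 hβ),
    mul_nonneg hl2 (sub_nonneg.2 htan)]

lemma caseC2 (r l2 σ x M b β : ℝ) (hl2 : 0 ≤ l2) (hσ : σ ^ 2 = 1)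
    (hr : 0 ≤ r) (hrM : r ≤ M) (hX : (1 + 2 * l2) * M ≤ x) (hb : σ * x = b)
    (hβ : σ * β ≤ |β|) (hβM : |β| ≤ M) :
    1 / 2 * (M * σ - b) ^ 2 + (2 * l2 * r * M + l2 * (M - r) ^ 2) ≤
      1 / 2 * (β - b) ^ 2 + (2 * l2 * r * |β| + l2 * (max (|β| - r) 0) ^ 2) := by
  subst hb
  have htan : (M - r) ^ 2 + 2 * (M - r) * (|β| - M) ≤ (max (|β| - r) 0) ^ 2 := by
    rcases le_total (|β|) r with h | h
    · rw [max_eq_right (by linarith)]; nlinarith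
    · rw [max_eq_left (by linarith)]; nlinarith [sq_nonneg (|β| - M)]
  have key : 1 / 2 * (β - σ * x) ^ 2 + (2 * l2 * r * |β| + l2 * (max (|β| - r) 0) ^ 2)
      - (1 / 2 * (M * σ - σ * x) ^ 2 + (2 * l2 * r * M + l2 * (M - r) ^ 2))
      = 1 / 2 * (β - M * σ) ^ 2 + (2 * l2 * r + 2 * l2 * (M - r)) * (|β| - σ * β)
        + (x - (1 + 2 * l2) * M) * (M - σ * β)
        + l2 * ((max (|β| - r) 0) ^ 2 - ((M - r) ^ 2 + 2 * (M - r) * (|β| - M))) := by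
    linear_combination (M * (x - M)) * hσ
  nlinarith [sq_nonneg (β - M * σ), key,
    mul_nonneg (by nlinarith : (0:ℝ) ≤ 2 * l2 * r + 2 * l2 * (M - r)) (sub_nonneg.2 hβ),
    mul_nonneg (by linarith : (0:ℝ) ≤ x - (1 + 2 * l2) * M) (by linarith : (0:ℝ) ≤ M - σ * β),
    mul_nonneg hl2 (sub_nonneg.2 htan)]

lemma sign_facts (b : ℝ) (hb : b ≠ 0) :
    (Real.sign b) ^ 2 = 1 ∧ Real.sign b * |b| = b ∧ |Real.sign b| = 1 := by
  rcases hb.lt_or_gt with h | h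
  · rw [Real.sign_of_neg h, abs_of_neg h]; norm_num
  · rw [Real.sign_of_pos h, abs_of_pos h]; norm_num

theorem thresholding_case_le
    (l0 l2 M b : ℝ) (hl0 : 0 < l0) (hl2 : 0 < l2) (hM : 0 < M)
    (hcase : Real.sqrt (l0 / l2) ≤ M)
    (βh : ℝ)
    (hβh : βh = if |b| ≤ 2 * Real.sqrt (l0 * l2) + Real.sqrt (l0 / l2)
                then boxST b (2 * Real.sqrt (l0 * l2)) M
                else boxST (b / (1 + 2 * l2)) 0 M) :
    |βh| ≤ M ∧
      ∀ β : ℝ, |β| ≤ M →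
        (1 / 2) * (βh - b) ^ 2 + 2 * l0 * revHuber (βh * Real.sqrt (l2 / l0)) ≤
          (1 / 2) * (β - b) ^ 2 + 2 * l0 * revHuber (β * Real.sqrt (l2 / l0)) := by
  subst hβh
  have hr0 : 0 < Real.sqrt (l0 / l2) := Real.sqrt_pos.2 (div_pos hl0 hl2)
  have hA0 : 0 < Real.sqrt (l0 * l2) := Real.sqrt_pos.2 (mul_pos hl0 hl2)
  set r := Real.sqrt (l0 / l2) with hrdef
  set A := Real.sqrt (l0 * l2) with hAdef
  have hr2 : r ^ 2 = l0 / l2 := Real.sq_sqrt (by positivity)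
  have hAr : A = l2 * r := by
    rw [hAdef, show l0 * l2 = (l2 * r) ^ 2 by rw [mul_pow, hr2]; field_simp]
    exact Real.sqrt_sq (by positivity)
  have hobj : ∀ β : ℝ, 2 * l0 * revHuber (β * Real.sqrt (l2 / l0)) =
      2 * A * |β| + l2 * (max (|β| - r) 0) ^ 2 := huber_eq l0 l2 hl0 hl2
  by_cases h1 : |b| ≤ 2 * A + r
  · rw [if_pos h1]
    by_cases h2 : |b| ≤ 2 * A
    · have hb0 : boxST b (2 * A) M = 0 := by rw [boxST, if_pos h2]
      rw [hb0]
      refine ⟨by simpa using hM.le, fun β hβ => ?_⟩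
      simp only [hobj]
      exact caseA (2 * A) r l2 b β hl2.le hr0.le h2
    · push_neg at h2
      have hbne : b ≠ 0 := by
        intro h; rw [h, abs_zero] at h2; linarith
      obtain ⟨hσ2, hσb, hσa⟩ := sign_facts b hbne
      set σ := Real.sign b with hσdef
      have hbb : boxST b (2 * A) M = (|b| - 2 * A) * σ := by
        rw [boxST, if_neg (not_le.2 h2), if_pos (by linarith)]
      rw [hbb]
      have habs : |(|b| - 2 * A) * σ| = |b| - 2 * A := by
        rw [abs_mul, hσa, mul_one, abs_of_nonneg (by linarith)]
      refine ⟨by rw [habs]; linarith, fun β hβ => ?_⟩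
      simp only [hobj]
      rw [habs, max_eq_right (by linarith)]
      exact caseB (2 * A) r l2 σ (|b|) b β hl2.le hσ2 (by linarith) hσb
        (by calc σ * β ≤ |σ * β| := le_abs_self _
          _ = |σ| * |β| := abs_mul σ β
          _ = |β| := by rw [hσa, one_mul])
  · push_neg at h1
    rw [if_neg (not_le.2 h1)]
    have hbne : b ≠ 0 := by
      intro h; rw [h, abs_zero] at h1; linarith
    obtain ⟨hσ2, hσb, hσa⟩ := sign_facts b hbne
    set σ := Real.sign b with hσdef
    have h12 : (0:ℝ) < 1 + 2 * l2 := by linarith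
    have habsd : |b / (1 + 2 * l2)| = |b| / (1 + 2 * l2) := by
      rw [abs_div, abs_of_pos h12]
    have hsgn : Real.sign (b / (1 + 2 * l2)) = σ := by
      rcases hbne.lt_or_gt with h | h
      · rw [Real.sign_of_neg (div_neg_of_neg_of_pos h h12), hσdef, Real.sign_of_neg h]
      · rw [Real.sign_of_pos (div_pos h h12), hσdef, Real.sign_of_pos h]
    set c := |b| / (1 + 2 * l2) with hcdef
    have hc0 : 0 < c := div_pos (abs_pos.2 hbne) h12
    have hcb : (1 + 2 * l2) * c = |b| := by
      rw [hcdef]; field_simp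
    have hrc : r < c := by
      have : (1 + 2 * l2) * r < (1 + 2 * l2) * c := by
        rw [hcb]; nlinarith [hAr]
      exact lt_of_mul_lt_mul_left this h12.le
    have hβσ : ∀ β : ℝ, σ * β ≤ |β| := fun β => by
      calc σ * β ≤ |σ * β| := le_abs_self _
        _ = |σ| * |β| := abs_mul σ β
        _ = |β| := by rw [hσa, one_mul]
    simp only [boxST, habsd, hsgn, ← hcdef, zero_add, sub_zero]
    rw [if_neg (not_le.2 hc0)]
    by_cases h3 : c ≤ M
    · rw [if_pos h3]
      have habs : |c * σ| = c := by
        rw [abs_mul, hσa, mul_one, abs_of_pos hc0]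
      refine ⟨by rw [habs]; exact h3, fun β hβ => ?_⟩
      simp only [hobj]
      rw [habs, max_eq_left (by linarith), hAr,
        show 2 * (l2 * r) = 2 * l2 * r by ring]
      exact caseC1 r l2 σ c b β hl2.le hσ2 hr0.le hrc.le (by rw [hcb]; exact hσb)
        (hβσ β)
    · rw [if_neg h3]
      push_neg at h3
      have habs : |M * σ| = M := by
        rw [abs_mul, hσa, mul_one, abs_of_pos hM]
      refine ⟨by rw [habs], fun β hβ => ?_⟩
      simp only [hobj]
      rw [habs, max_eq_left (by linarith), hAr,
        show 2 * (l2 * r) = 2 * l2 * r by ring]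
      have hX : (1 + 2 * l2) * M ≤ |b| := by
        rw [← hcb]; nlinarith
      exact caseC2 r l2 σ (|b|) M b β hl2.le hσ2 hr0.le (by linarith) hX hσb
        (hβσ β) hβ
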